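/- Let G be a finite simple graph and k an integer. If H1 and H2 are k-trusses of G that share at least one common edge, then the union subgraph H1 ∪ H2 is a k-truss of G. Consequently, for every edge e of G contained in some k-truss, there is a unique maximal k-truss of G containing e (the union of all k-trusses of G containing e). -/

import Mathlib

open SimpleGraph

variable {V : Type*}

/-- `H` is a `k`-truss of `G`: a connected subgraph with at least one edge in which
every edge lies in at least `k - 2` triangles of `H` (i.e. the endpoints of every edge
have at least `k - 2` common neighbors in `H`). -/
def IsTruss (G : SimpleGraph V) (k : ℕ) (H : G.Subgraph) : Prop :=
  H.Connected ∧ H.edgeSet.Nonempty ∧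
    ∀ a b : V, H.Adj a b → k - 2 ≤ {c : V | H.Adj a c ∧ H.Adj b c}.ncard

/-- The truss number `φ_G(e)` of an edge `e`: the largest `k` such that `e` lies in some
`k`-truss of `G`. -/
noncomputable def trussNumber (G : SimpleGraph V) (e : Sym2 V) : ℕ :=
  sSup {k : ℕ | ∃ H : G.Subgraph, IsTruss G k H ∧ e ∈ H.edgeSet}

/-- The support of the edge `(a, b)` in a subgraph `H`: the number of triangles of `H`
containing it, i.e. the number of common neighbors of `a` and `b` in `H`. -/
noncomputable def suppIn {G : SimpleGraph V} (H : G.Subgraph) (a b : V) : ℕ :=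
  {c : V | H.Adj a c ∧ H.Adj b c}.ncard

/-- The support of the edge `(a, b)` in `G`. -/
noncomputable def suppG (G : SimpleGraph V) (a b : V) : ℕ :=
  {c : V | G.Adj a c ∧ G.Adj b c}.ncard

/-- `S_{a,b}`: the common neighbors of `a` and `b` in `G`. -/
def commonNbrs (G : SimpleGraph V) (a b : V) : Set V :=
  {c : V | G.Adj a c ∧ G.Adj b c}

/-- `E_{S_{a,b} ↔ {a,b}}`: the edges of `G` joining a common neighbor of `a` and `b`
to `a` or to `b`. -/
def sideEdges (G : SimpleGraph V) (a b : V) : Set (Sym2 V) :=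
  {e | ∃ c, G.Adj a c ∧ G.Adj b c ∧ (e = s(a, c) ∨ e = s(b, c))}

/-- `k_min((a,b))`: minimum truss number among the edges of `E_{S_{a,b} ↔ {a,b}}`. -/
noncomputable def kmin (G : SimpleGraph V) (a b : V) : ℕ :=
  sInf (trussNumber G '' sideEdges G a b)

/-- `k_max((a,b))`: maximum truss number among the edges of `E_{S_{a,b} ↔ {a,b}}`. -/
noncomputable def kmax (G : SimpleGraph V) (a b : V) : ℕ :=
  sSup (trussNumber G '' sideEdges G a b)

/-- `G + (a,b)`: the graph obtained from `G` by inserting the edge `(a, b)`. -/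
def insertEdge (G : SimpleGraph V) (a b : V) : SimpleGraph V :=
  G ⊔ fromEdgeSet {s(a, b)}

theorem stmt18 [Fintype V] (G : SimpleGraph V) (k : ℕ) :
    (∀ H1 H2 : G.Subgraph, IsTruss G k H1 → IsTruss G k H2 →
      (H1.edgeSet ∩ H2.edgeSet).Nonempty → IsTruss G k (H1 ⊔ H2)) ∧
    (∀ e : Sym2 V, (∃ H : G.Subgraph, IsTruss G k H ∧ e ∈ H.edgeSet) →
      ∃! H : G.Subgraph, IsTruss G k H ∧ e ∈ H.edgeSet ∧
        ∀ H' : G.Subgraph, IsTruss G k H' → e ∈ H'.edgeSet → H' ≤ H) := by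
  
  have part1 : ∀ H1 H2 : G.Subgraph, IsTruss G k H1 → IsTruss G k H2 →
      (H1.edgeSet ∩ H2.edgeSet).Nonempty → IsTruss G k (H1 ⊔ H2) := by
    intro H1 H2 h1 h2 ⟨e, he1, he2⟩
    obtain ⟨⟨a, b⟩, rfl⟩ := e.exists_rep
    rw [Subgraph.mem_edgeSet] at he1 he2
    refine ⟨Subgraph.connected_sup h1.1.preconnected h2.1.preconnected ⟨a, ?_⟩, ?_, ?_⟩
    · rw [Subgraph.verts_inf]
      exact ⟨he1.fst_mem, he2.fst_mem⟩
    · exact ⟨s(a, b), Subgraph.edgeSet_mono le_sup_left (Subgraph.mem_edgeSet.mpr he1)⟩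
    · intro x y hxy
      rw [Subgraph.sup_adj] at hxy
      rcases hxy with h | h
      · refine le_trans (h1.2.2 x y h) (Set.ncard_le_ncard ?_ (Set.toFinite _))
        intro c ⟨hc1, hc2⟩
        exact ⟨Subgraph.sup_adj.mpr (Or.inl hc1), Subgraph.sup_adj.mpr (Or.inl hc2)⟩
      · refine le_trans (h2.2.2 x y h) (Set.ncard_le_ncard ?_ (Set.toFinite _))
        intro c ⟨hc1, hc2⟩
        exact ⟨Subgraph.sup_adj.mpr (Or.inr hc1), Subgraph.sup_adj.mpr (Or.inr hc2)⟩
  refine ⟨part1, ?_⟩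
  intro e ⟨H0, hH0, heH0⟩
  have hfin : Finite G.Subgraph :=
    Finite.of_injective (fun H => (H.verts, H.Adj)) (by
      intro A B h
      simp only [Prod.mk.injEq] at h
      exact Subgraph.ext h.1 h.2)
  have key : ∀ S : Set G.Subgraph, S.Finite →
      S.Nonempty → (∀ H ∈ S, IsTruss G k H ∧ e ∈ H.edgeSet) →
      IsTruss G k (sSup S) ∧ e ∈ (sSup S).edgeSet := by
    intro S hS
    refine Set.Finite.induction_on (motive := fun S _ => S.Nonempty →
      (∀ H ∈ S, IsTruss G k H ∧ e ∈ H.edgeSet) →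
      IsTruss G k (sSup S) ∧ e ∈ (sSup S).edgeSet) S hS
      (fun h => absurd h Set.not_nonempty_empty) ?_
    intro A T hA hT ih _ hall
    rcases T.eq_empty_or_nonempty with rfl | hTne
    · simpa [sSup_insert] using hall A (Set.mem_insert _ _)
    · have hAT := hall A (Set.mem_insert _ _)
      obtain ⟨hST, heST⟩ := ih hTne (fun H hH => hall H (Set.mem_insert_of_mem _ hH))
      rw [sSup_insert]
      exact ⟨part1 A (sSup T) hAT.1 hST ⟨e, hAT.2, heST⟩,
        Subgraph.edgeSet_mono le_sup_left hAT.2⟩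
  set S := {H : G.Subgraph | IsTruss G k H ∧ e ∈ H.edgeSet} with hSdef
  obtain ⟨hM, heM⟩ := key S (Set.toFinite _) ⟨H0, hH0, heH0⟩ (fun H hH => hH)
  refine ⟨sSup S, ⟨hM, heM, fun H' h1 h2 => le_sSup ⟨h1, h2⟩⟩, ?_⟩
  intro H ⟨hH, heH, hmax⟩
  exact le_antisymm (le_sSup (Set.mem_setOf.mpr ⟨hH, heH⟩)) (hmax (sSup S) hM heM)
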